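/- Let L be a finitely generated free ℤ-module equipped with a symmetric bilinear form ⟨·,·⟩ such that L ⊗ ℝ contains no 2-dimensional totally isotropic subspace. Let (α_j)_{j∈ℕ} be a sequence of nonzero elements of L with ⟨α_i, α_j⟩ = 0 for all i ≠ j. Then there exists β ∈ L with ⟨β, β⟩ = 0 such that all but finitely many of the α_j lie in the ℚ-span of β (in L ⊗ ℚ). -/

import Mathlib

open TensorProduct

private lemma pair_indep_aux
    {L : Type*} [AddCommGroup L] [Module ℤ L] [Module.Free ℤ L] [Module.Finite ℤ L]
    (x y : L) (hy : y ≠ 0) (h : ¬ ∃ m n : ℤ, n ≠ 0 ∧ n • x = m • y) :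
    LinearIndependent ℝ ![(1:ℝ) ⊗ₜ[ℤ] x, (1:ℝ) ⊗ₜ[ℤ] y] := by
  classical
  rw [LinearIndependent.pair_iff]
  intro a b hab
  set bL := Module.Free.chooseBasis ℤ L
  set bR := bL.baseChange ℝ
  have hcoord : ∀ k, a * (bL.repr x k : ℝ) + b * (bL.repr y k : ℝ) = 0 := by
    intro k
    have := congrArg (fun v => (bR.repr v) k) hab
    simpa [bR, smul_tmul', map_add, mul_comm] using this
  obtain ⟨i0, hi0⟩ : ∃ k, bL.repr y k ≠ 0 := by
    by_contra hk
    push_neg at hk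
    apply hy
    apply bL.repr.injective
    ext k
    simpa using hk k
  by_cases ha : a = 0
  · subst ha
    refine ⟨rfl, ?_⟩
    have := hcoord i0
    simp only [zero_mul, zero_add] at this
    have hcast : (bL.repr y i0 : ℝ) ≠ 0 := Int.cast_ne_zero.mpr hi0
    exact (mul_eq_zero.mp this).resolve_right hcast
  · exfalso
    apply h
    refine ⟨bL.repr x i0, bL.repr y i0, hi0, ?_⟩
    apply bL.ext_elem
    intro k
    rw [map_zsmul, map_zsmul]
    have hr : (bL.repr y i0 : ℝ) * (bL.repr x k : ℝ) = (bL.repr x i0 : ℝ) * (bL.repr y k : ℝ) := by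
      have h1 := hcoord k
      have h2 := hcoord i0
      apply mul_left_cancel₀ ha
      linear_combination ((bL.repr y i0 : ℝ)) * h1 - ((bL.repr y k : ℝ)) * h2
    have hz : (bL.repr y i0) * (bL.repr x k) = (bL.repr x i0) * (bL.repr y k) := by
      exact_mod_cast hr
    simpa [smul_eq_mul] using hz

/-- Let `L` be a finitely generated free `ℤ`-module with a symmetric bilinear form
such that `L ⊗ ℝ` contains no 2-dimensional totally isotropic subspace. If
`(α_j)_{j ∈ ℕ}` is a sequence of nonzero elements of `L` that are pairwise orthogonal,
then there is an isotropic `β ∈ L` such that all but finitely many `α_j` lie in the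
`ℚ`-span of `β`. -/
theorem pairwise_orthogonal_eventually_proportional
    {L : Type*} [AddCommGroup L] [Module ℤ L] [Module.Free ℤ L] [Module.Finite ℤ L]
    (B : LinearMap.BilinForm ℤ L) (hsymm : ∀ u v : L, B u v = B v u)
    (hiso : ¬ ∃ W : Submodule ℝ (ℝ ⊗[ℤ] L), Module.finrank ℝ W = 2 ∧
      ∀ v ∈ W, ∀ w ∈ W, B.baseChange ℝ v w = 0)
    (α : ℕ → L) (hα : ∀ j, α j ≠ 0)
    (horth : ∀ i j, i ≠ j → B (α i) (α j) = 0) :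
    ∃ β : L, B β β = 0 ∧
      {j : ℕ | ¬ ∃ m n : ℤ, n ≠ 0 ∧ n • α j = m • β}.Finite := by
  classical
  -- L is Noetherian, so the span of the α's is finitely generated
  have hfg : (Submodule.span ℤ (Set.range α)).FG := IsNoetherian.noetherian _
  obtain ⟨s, hs⟩ : ∃ s : Finset ℕ,
      Submodule.span ℤ (Set.range α) ≤ ⨆ j ∈ s, Submodule.span ℤ {α j} := by
    have hc := (Submodule.fg_iff_compact _).mp hfg
    apply CompleteLattice.IsCompactElement.exists_finset_of_le_iSup (hk := hc)
    rw [Submodule.span_range_eq_iSup]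
  set M := ⨆ j ∈ s, Submodule.span ℤ {α j} with hM
  have hmem : ∀ j, α j ∈ M := fun j => hs (Submodule.subset_span ⟨j, rfl⟩)
  have hker : ∀ j ∉ s, ∀ v ∈ M, B (α j) v = 0 := by
    intro j hj v hv
    have hle : M ≤ LinearMap.ker (B (α j)) := by
      refine iSup_le fun i => iSup_le fun hi => ?_
      rw [Submodule.span_le, Set.singleton_subset_iff]
      have : B (α j) (α i) = 0 := horth j i (fun hji => hj (hji ▸ hi))
      simpa [LinearMap.mem_ker] using this
    simpa [LinearMap.mem_ker] using hle hv
  have hisoj : ∀ j ∉ s, B (α j) (α j) = 0 := fun j hj => hker j hj _ (hmem j)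
  obtain ⟨j0, hj0⟩ : ∃ j0, j0 ∉ s := Infinite.exists_notMem_finset s
  refine ⟨α j0, hisoj j0 hj0, ?_⟩
  apply Set.Finite.subset s.finite_toSet
  intro j hj
  simp only [Set.mem_setOf_eq] at hj
  by_contra hjs
  have hjs' : j ∉ s := fun h' => hjs h'
  have hne : j ≠ j0 := by
    rintro rfl
    exact hj ⟨1, 1, one_ne_zero, rfl⟩
  apply hiso
  set u1 : ℝ ⊗[ℤ] L := (1:ℝ) ⊗ₜ[ℤ] (α j) with hu1
  set u2 : ℝ ⊗[ℤ] L := (1:ℝ) ⊗ₜ[ℤ] (α j0) with hu2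
  have hind : LinearIndependent ℝ ![u1, u2] := pair_indep_aux (α j) (α j0) (hα j0) hj
  have z11 : B.baseChange ℝ u1 u1 = 0 := by
    rw [hu1, LinearMap.BilinForm.baseChange_tmul, hisoj j hjs']; simp
  have z12 : B.baseChange ℝ u1 u2 = 0 := by
    rw [hu1, hu2, LinearMap.BilinForm.baseChange_tmul, horth j j0 hne]; simp
  have z21 : B.baseChange ℝ u2 u1 = 0 := by
    rw [hu1, hu2, LinearMap.BilinForm.baseChange_tmul, horth j0 j (Ne.symm hne)]; simp
  have z22 : B.baseChange ℝ u2 u2 = 0 := by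
    rw [hu2, LinearMap.BilinForm.baseChange_tmul, hisoj j0 hj0]; simp
  refine ⟨Submodule.span ℝ {u1, u2}, ?_, ?_⟩
  · have hr : ({u1, u2} : Set (ℝ ⊗[ℤ] L)) = Set.range ![u1, u2] := by
      ext v
      simp only [Set.mem_insert_iff, Set.mem_singleton_iff, Set.mem_range, Fin.exists_fin_two,
        Matrix.cons_val_zero, Matrix.cons_val_one, Matrix.head_cons]
      tauto
    rw [hr, finrank_span_eq_card hind]
    simp
  · intro v hv w hw
    have h1 : ∀ w ∈ Submodule.span ℝ ({u1, u2} : Set (ℝ ⊗[ℤ] L)), B.baseChange ℝ u1 w = 0 := by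
      intro w hw
      have hle : Submodule.span ℝ ({u1, u2} : Set (ℝ ⊗[ℤ] L)) ≤
          LinearMap.ker (B.baseChange ℝ u1) := by
        rw [Submodule.span_le]
        rintro x (rfl | rfl) <;> simp [LinearMap.mem_ker, z11, z12]
      simpa [LinearMap.mem_ker] using hle hw
    have h2 : ∀ w ∈ Submodule.span ℝ ({u1, u2} : Set (ℝ ⊗[ℤ] L)), B.baseChange ℝ u2 w = 0 := by
      intro w hw
      have hle : Submodule.span ℝ ({u1, u2} : Set (ℝ ⊗[ℤ] L)) ≤
          LinearMap.ker (B.baseChange ℝ u2) := by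
        rw [Submodule.span_le]
        rintro x (rfl | rfl) <;> simp [LinearMap.mem_ker, z21, z22]
      simpa [LinearMap.mem_ker] using hle hw
    have hle : Submodule.span ℝ ({u1, u2} : Set (ℝ ⊗[ℤ] L)) ≤
        LinearMap.ker ((B.baseChange ℝ).flip w) := by
      rw [Submodule.span_le]
      rintro x (rfl | rfl) <;> simp [LinearMap.mem_ker, LinearMap.flip_apply, h1 w hw, h2 w hw]
    simpa [LinearMap.mem_ker, LinearMap.flip_apply] using hle hv
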